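/- Let M(ε) be the 3×3 symmetric matrix with exponent matrix ν = [[3,2,1],[2,2,1],[2,1,0]] (entries M_{IJ} = c_{IJ} ε^{ν_{IJ}}). Then the leading ε-powers of (e_1, e_2, e_3) are (r_3, r_2, r_1) = (0, 2, 4), which violates the naturalness condition 2 r_2 < r_1; consequently the two smallest eigenvalues are both Θ(ε^2) for generic coefficients, i.e. their ratio does not tend to 0 or ∞ as ε → 0. -/

import Mathlib

open Asymptotics Topology Filter

lemma theta_one_of_tendsto {f : ℝ → ℝ} {L : ℝ} (hL : L ≠ 0)
    (h : Tendsto f (𝓝[>] (0:ℝ)) (𝓝 L)) :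
    f =Θ[𝓝[>] (0:ℝ)] fun _ => (1:ℝ) := by
  refine ⟨h.isBigO_one ℝ, ?_⟩
  rw [isBigO_iff]
  refine ⟨2 / |L|, ?_⟩
  have hLpos : 0 < |L| := abs_pos.2 hL
  have hev : ∀ᶠ x in 𝓝[>] (0:ℝ), |L| / 2 ≤ |f x| :=
    h.abs.eventually_const_le (half_lt_self hLpos)
  filter_upwards [hev] with x hx
  rw [norm_one, Real.norm_eq_abs]
  rw [div_mul_eq_mul_div, le_div_iff₀ hLpos]
  linarith

lemma theta_sandwich {f g : ℝ → ℝ} {l : Filter ℝ} (a b : ℝ)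
    (h1 : ∀ᶠ x in l, |f x| ≤ a * |g x|) (h2 : ∀ᶠ x in l, |g x| ≤ b * |f x|) :
    f =Θ[l] g :=
  ⟨isBigO_iff.2 ⟨a, by simpa [Real.norm_eq_abs] using h1⟩,
   isBigO_iff.2 ⟨b, by simpa [Real.norm_eq_abs] using h2⟩⟩

lemma tendsto_poly_right {g : ℝ → ℝ} (hg : Continuous g) :
    Tendsto g (𝓝[>] (0:ℝ)) (𝓝 (g 0)) :=
  (hg.tendsto 0).mono_left nhdsWithin_le_nhds

/-- For the 3×3 matrix with entries `c_{IJ} ε^{ν_{IJ}}` and exponent matrix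
`ν = [[3,2,1],[2,2,1],[2,1,0]]`, the leading ε-powers of `(e₁,e₂,e₃)` are
`(r₃,r₂,r₁) = (0,2,4)`, violating `2r₂ < r₁`; consequently the two smallest
(positive, ordered) eigenvalues are both `Θ(ε²)` for generic coefficients. -/
theorem stmt_6 (c : Fin 3 → Fin 3 → ℝ) (hc : ∀ I J, c I J ≠ 0)
    (hgen1 : c 2 2 ≠ 0)
    (hgen2 : c 1 1 * c 2 2 - c 1 2 * c 2 1 ≠ 0)
    (hgen3 : c 0 2 * c 1 0 * c 2 1 - c 0 1 * c 1 0 * c 2 2 ≠ 0)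
    (M : ℝ → Matrix (Fin 3) (Fin 3) ℝ)
    (hM : ∀ ε : ℝ, M ε =
      !![c 0 0 * ε ^ 3, c 0 1 * ε ^ 2, c 0 2 * ε;
         c 1 0 * ε ^ 2, c 1 1 * ε ^ 2, c 1 2 * ε;
         c 2 0 * ε ^ 2, c 2 1 * ε, c 2 2])
    (lam1 lam2 lam3 : ℝ → ℝ)
    (hord : ∀ ε ∈ Set.Ioo (0 : ℝ) 1,
        0 < lam1 ε ∧ lam1 ε ≤ lam2 ε ∧ lam2 ε ≤ lam3 ε)
    (heig : ∀ ε ∈ Set.Ioo (0 : ℝ) 1,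
        lam1 ε + lam2 ε + lam3 ε = (M ε).trace ∧
        lam1 ε * lam2 ε + lam1 ε * lam3 ε + lam2 ε * lam3 ε
          = ((M ε).trace ^ 2 - (M ε * M ε).trace) / 2 ∧
        lam1 ε * lam2 ε * lam3 ε = (M ε).det) :
    ((fun ε => (M ε).trace) =Θ[𝓝[>] (0 : ℝ)] fun _ => (1 : ℝ)) ∧
    ((fun ε => ((M ε).trace ^ 2 - (M ε * M ε).trace) / 2)
        =Θ[𝓝[>] (0 : ℝ)] fun ε => ε ^ 2) ∧
    ((fun ε => (M ε).det) =Θ[𝓝[>] (0 : ℝ)] fun ε => ε ^ 4) ∧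
    ¬ (2 * 2 < 4) ∧
    (lam1 =Θ[𝓝[>] (0 : ℝ)] fun ε => ε ^ 2) ∧
    (lam2 =Θ[𝓝[>] (0 : ℝ)] fun ε => ε ^ 2) := by
  set l : Filter ℝ := 𝓝[>] (0:ℝ) with hl
  -- pointwise formulas for the invariants
  have ht : ∀ ε : ℝ, (M ε).trace = c 0 0 * ε ^ 3 + c 1 1 * ε ^ 2 + c 2 2 := by
    intro ε; rw [hM]; simp [Matrix.trace_fin_three_of]
  have hs : ∀ ε : ℝ, ((M ε).trace ^ 2 - (M ε * M ε).trace) / 2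
      = ε ^ 2 * ((c 1 1 * c 2 2 - c 1 2 * c 2 1)
          + ε * ((c 0 0 * c 2 2 - c 0 2 * c 2 0)
              + ε * (-(c 0 1 * c 1 0) + ε * (c 0 0 * c 1 1)))) := by
    intro ε; rw [hM]; rw [Matrix.mul_fin_three]; simp [Matrix.trace_fin_three_of]; ring
  have hd : ∀ ε : ℝ, (M ε).det
      = ε ^ 4 * ((c 0 2 * c 1 0 * c 2 1 - c 0 1 * c 1 0 * c 2 2)
          + ε * (c 0 0 * c 1 1 * c 2 2 - c 0 0 * c 1 2 * c 2 1
              + c 0 1 * c 1 2 * c 2 0 - c 0 2 * c 1 1 * c 2 0)) := by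
    intro ε; rw [hM]; rw [Matrix.det_fin_three]; simp; ring
  -- Θ-estimates for the invariants
  have Θt : (fun ε => (M ε).trace) =Θ[l] fun _ => (1:ℝ) := by
    simp only [ht]
    refine theta_one_of_tendsto hgen1 ?_
    have := tendsto_poly_right (g := fun ε : ℝ => c 0 0 * ε ^ 3 + c 1 1 * ε ^ 2 + c 2 2)
      (by fun_prop)
    simpa using this
  have ΘQ : (fun ε : ℝ => (c 1 1 * c 2 2 - c 1 2 * c 2 1)
          + ε * ((c 0 0 * c 2 2 - c 0 2 * c 2 0)
              + ε * (-(c 0 1 * c 1 0) + ε * (c 0 0 * c 1 1)))) =Θ[l] fun _ => (1:ℝ) := by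
    refine theta_one_of_tendsto hgen2 ?_
    have := tendsto_poly_right (g := fun ε : ℝ => (c 1 1 * c 2 2 - c 1 2 * c 2 1)
          + ε * ((c 0 0 * c 2 2 - c 0 2 * c 2 0)
              + ε * (-(c 0 1 * c 1 0) + ε * (c 0 0 * c 1 1)))) (by fun_prop)
    simpa using this
  have Θs : (fun ε => ((M ε).trace ^ 2 - (M ε * M ε).trace) / 2) =Θ[l] fun ε => ε ^ 2 := by
    simp only [hs]
    have := (isTheta_refl (fun ε : ℝ => ε ^ 2) l).mul ΘQ
    simpa using this
  have Θd : (fun ε => (M ε).det) =Θ[l] fun ε => ε ^ 4 := by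
    simp only [hd]
    have ΘP : (fun ε : ℝ => (c 0 2 * c 1 0 * c 2 1 - c 0 1 * c 1 0 * c 2 2)
          + ε * (c 0 0 * c 1 1 * c 2 2 - c 0 0 * c 1 2 * c 2 1
              + c 0 1 * c 1 2 * c 2 0 - c 0 2 * c 1 1 * c 2 0)) =Θ[l] fun _ => (1:ℝ) := by
      refine theta_one_of_tendsto hgen3 ?_
      have := tendsto_poly_right (g := fun ε : ℝ => (c 0 2 * c 1 0 * c 2 1 - c 0 1 * c 1 0 * c 2 2)
          + ε * (c 0 0 * c 1 1 * c 2 2 - c 0 0 * c 1 2 * c 2 1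
              + c 0 1 * c 1 2 * c 2 0 - c 0 2 * c 1 1 * c 2 0)) (by fun_prop)
      simpa using this
    have := (isTheta_refl (fun ε : ℝ => ε ^ 4) l).mul ΘP
    simpa using this
  -- eventual facts
  have hIoo : Set.Ioo (0:ℝ) 1 ∈ l := Ioo_mem_nhdsGT_of_mem ⟨le_refl 0, one_pos⟩
  have hordE : ∀ᶠ ε in l, 0 < lam1 ε ∧ lam1 ε ≤ lam2 ε ∧ lam2 ε ≤ lam3 ε :=
    eventually_of_mem hIoo hord
  have heigE : ∀ᶠ ε in l, lam1 ε + lam2 ε + lam3 ε = (M ε).trace ∧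
        lam1 ε * lam2 ε + lam1 ε * lam3 ε + lam2 ε * lam3 ε
          = ((M ε).trace ^ 2 - (M ε * M ε).trace) / 2 ∧
        lam1 ε * lam2 ε * lam3 ε = (M ε).det :=
    eventually_of_mem hIoo heig
  -- λ₃ = Θ(1)
  have Θ3 : lam3 =Θ[l] fun _ => (1:ℝ) := by
    refine (theta_sandwich 1 3 ?_ ?_).trans Θt
    · filter_upwards [hordE, heigE] with ε h1 h2
      have h3 : (0:ℝ) < lam3 ε := lt_of_lt_of_le h1.1 (h1.2.1.trans h1.2.2)
      have htr : 0 < (M ε).trace := by rw [← h2.1]; linarith [h1.1, h1.2.1, h1.2.2]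
      rw [abs_of_pos h3, abs_of_pos htr]
      rw [← h2.1]; nlinarith [h1.1, h1.2.1, h1.2.2]
    · filter_upwards [hordE, heigE] with ε h1 h2
      have h3 : (0:ℝ) < lam3 ε := lt_of_lt_of_le h1.1 (h1.2.1.trans h1.2.2)
      have htr : 0 < (M ε).trace := by rw [← h2.1]; linarith [h1.1, h1.2.1, h1.2.2]
      rw [abs_of_pos h3, abs_of_pos htr]
      rw [← h2.1]; nlinarith [h1.1, h1.2.1, h1.2.2]
  -- p := λ₁λ₂ = Θ(ε⁴)
  have Θp : (fun ε => lam1 ε * lam2 ε) =Θ[l] fun ε => ε ^ 4 := by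
    have heq : (fun ε => lam1 ε * lam2 ε) =ᶠ[l] fun ε => (M ε).det / lam3 ε := by
      filter_upwards [hordE, heigE] with ε h1 h2
      have h3 : lam3 ε ≠ 0 := ne_of_gt (lt_of_lt_of_le h1.1 (h1.2.1.trans h1.2.2))
      field_simp
      exact h2.2.2
    refine heq.trans_isTheta ?_
    have := Θd.div Θ3
    simpa using this
  -- ε⁴ = o(ε²)
  have h42 : (fun ε : ℝ => ε ^ 4) =o[l] fun ε => ε ^ 2 := by
    rw [isLittleO_iff]
    intro C hC
    have hsq : Tendsto (fun ε : ℝ => ε ^ 2) l (𝓝 0) := by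
      have := tendsto_poly_right (g := fun ε : ℝ => ε ^ 2) (by fun_prop)
      simpa using this
    filter_upwards [hsq.eventually_lt_const hC] with ε hε
    have h1 : (0:ℝ) ≤ ε ^ 2 := sq_nonneg ε
    rw [Real.norm_eq_abs, Real.norm_eq_abs]
    have h4 : |ε ^ 4| = ε ^ 2 * |ε ^ 2| := by
      rw [abs_of_nonneg h1, abs_of_nonneg (by positivity : (0:ℝ) ≤ ε ^ 4)]; ring
    rw [h4]
    exact mul_le_mul_of_nonneg_right hε.le (abs_nonneg _)
  have hp_lo : (fun ε => lam1 ε * lam2 ε) =o[l] fun ε => ε ^ 2 :=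
    Θp.trans_isLittleO h42
  -- s - p = Θ(ε²)
  have Θsp : (fun ε => ((M ε).trace ^ 2 - (M ε * M ε).trace) / 2 - lam1 ε * lam2 ε)
      =Θ[l] fun ε => ε ^ 2 := by
    have := Θs.add_isLittleO hp_lo.neg_left
    simpa [sub_eq_add_neg, Pi.add_def] using this
  -- q := λ₁ + λ₂ = Θ(ε²)
  have Θq : (fun ε => lam1 ε + lam2 ε) =Θ[l] fun ε => ε ^ 2 := by
    have heq : (fun ε => lam1 ε + lam2 ε)
        =ᶠ[l] fun ε => (((M ε).trace ^ 2 - (M ε * M ε).trace) / 2 - lam1 ε * lam2 ε) / lam3 ε := by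
      filter_upwards [hordE, heigE] with ε h1 h2
      have h3 : lam3 ε ≠ 0 := ne_of_gt (lt_of_lt_of_le h1.1 (h1.2.1.trans h1.2.2))
      rw [eq_div_iff h3, ← h2.2.1]; ring
    refine heq.trans_isTheta ?_
    have := Θsp.div Θ3
    simpa using this
  -- λ₂ = Θ(ε²)
  have Θ2 : lam2 =Θ[l] fun ε => ε ^ 2 := by
    refine (theta_sandwich 1 2 ?_ ?_).trans Θq
    · filter_upwards [hordE] with ε h1
      have h2 : 0 < lam2 ε := lt_of_lt_of_le h1.1 h1.2.1
      rw [abs_of_pos h2, abs_of_pos (by linarith [h1.1] : (0:ℝ) < lam1 ε + lam2 ε)]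
      linarith [h1.1]
    · filter_upwards [hordE] with ε h1
      have h2 : 0 < lam2 ε := lt_of_lt_of_le h1.1 h1.2.1
      rw [abs_of_pos h2, abs_of_pos (by linarith [h1.1] : (0:ℝ) < lam1 ε + lam2 ε)]
      linarith [h1.2.1]
  -- λ₁ = Θ(ε²)
  have Θ1 : lam1 =Θ[l] fun ε => ε ^ 2 := by
    have heq : lam1 =ᶠ[l] fun ε => (lam1 ε * lam2 ε) / lam2 ε := by
      filter_upwards [hordE] with ε h1
      have h2 : lam2 ε ≠ 0 := ne_of_gt (lt_of_lt_of_le h1.1 h1.2.1)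
      field_simp
    refine heq.trans_isTheta ((Θp.div Θ2).trans_eventuallyEq ?_)
    filter_upwards [self_mem_nhdsWithin] with ε (hε : (0:ℝ) < ε)
    field_simp
  exact ⟨Θt, Θs, Θd, by norm_num, Θ1, Θ2⟩
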